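/- Let m : ℕ → ℝ be completely multiplicative with values in {-1, 0, 1}, and suppose for all x > 0 that ∑_{n=1}^∞ λ(n)·n·f(2πn²/x) > 0, where λ is the Liouville function and f(y) = (1/y)∫_y^∞ e^{-t}/t dt. If m differs from λ at only finitely many primes, then ∑_{n=1}^∞ m(n)·n·f(2πn²/x) ≥ ∑_{n=1}^∞ λ(n)·n·f(2πn²/x) for all x > 0. -/

import Mathlib

noncomputable def f (y : ℝ) : ℝ := (1 / y) * ∫ t in Set.Ioi y, Real.exp (-t) / t

noncomputable def liouville (n : ℕ) : ℝ := (-1) ^ (ArithmeticFunction.cardFactors n)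

open Real MeasureTheory

lemma aux_integrable {y : ℝ} (hy : 0 < y) :
    IntegrableOn (fun t => Real.exp (-t) / t) (Set.Ioi y) := by
  have hg : IntegrableOn (fun t => Real.exp (-(1:ℝ) * t) * (1/y)) (Set.Ioi y) :=
    (exp_neg_integrableOn_Ioi y one_pos).mul_const _
  refine Integrable.mono' hg ?_ ?_
  · exact ((Real.measurable_exp.comp measurable_neg).div measurable_id).aestronglyMeasurable
  · filter_upwards [ae_restrict_mem measurableSet_Ioi] with t ht
    have hty : y < t := ht
    have ht0 : 0 < t := hy.trans hty
    rw [Real.norm_eq_abs, abs_div, abs_of_pos (Real.exp_pos _), abs_of_pos ht0, neg_one_mul,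
      mul_one_div]
    exact div_le_div_of_nonneg_left (Real.exp_pos _).le hy hty.le

lemma f_nonneg {y : ℝ} (hy : 0 < y) : 0 ≤ f y := by
  unfold f
  apply mul_nonneg (by positivity)
  apply setIntegral_nonneg measurableSet_Ioi
  intro t ht
  have : 0 < t := hy.trans ht
  positivity

lemma f_le {y : ℝ} (hy : 0 < y) : f y ≤ Real.exp (-y) / y ^ 2 := by
  have h1 : (∫ t in Set.Ioi y, Real.exp (-t) / t) ≤ Real.exp (-y) / y := by
    have h2 : (∫ t in Set.Ioi y, Real.exp (-t) / t) ≤ ∫ t in Set.Ioi y, Real.exp (-t) / y := by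
      apply setIntegral_mono_on (aux_integrable hy) ?_ measurableSet_Ioi
      · intro t ht
        exact div_le_div_of_nonneg_left (Real.exp_pos _).le hy (le_of_lt ht)
      · simpa [div_eq_mul_inv, IntegrableOn] using (exp_neg_integrableOn_Ioi y one_pos).mul_const y⁻¹
    rw [show (fun t => Real.exp (-t) / y) = fun t => Real.exp (-t) * y⁻¹ from by ext t; ring] at h2
    rwa [integral_mul_const, integral_exp_neg_Ioi, ← div_eq_mul_inv] at h2
  unfold f
  calc (1/y) * ∫ t in Set.Ioi y, Real.exp (-t) / t ≤ (1/y) * (Real.exp (-y) / y) := by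
        apply mul_le_mul_of_nonneg_left h1 (by positivity)
  _ = Real.exp (-y) / y ^ 2 := by field_simp

noncomputable def auxA (x : ℝ) (n : ℕ) : ℝ := (n : ℝ) * f (2 * Real.pi * (n : ℝ) ^ 2 / x)

lemma auxA_zero (x : ℝ) : auxA x 0 = 0 := by simp [auxA]

lemma auxA_nonneg {x : ℝ} (hx : 0 < x) (n : ℕ) : 0 ≤ auxA x n := by
  rcases Nat.eq_zero_or_pos n with h | h
  · simp [h, auxA]
  · have hn : (0:ℝ) < n := by exact_mod_cast h
    exact mul_nonneg hn.le (f_nonneg (by positivity))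

lemma auxA_summable {x : ℝ} (hx : 0 < x) : Summable (auxA x) := by
  have hr0 : 0 ≤ Real.exp (-(2 * Real.pi / x)) := (Real.exp_pos _).le
  have hr1 : Real.exp (-(2 * Real.pi / x)) < 1 := by
    rw [Real.exp_lt_one_iff]
    have : 0 < 2 * Real.pi / x := by positivity
    linarith
  have hsum : Summable (fun n : ℕ => x^2 / (2 * Real.pi)^2 * Real.exp (-(2 * Real.pi / x)) ^ n) :=
    (summable_geometric_of_lt_one hr0 hr1).mul_left _
  refine Summable.of_nonneg_of_le (fun n => auxA_nonneg hx n) (fun n => ?_) hsum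
  rcases Nat.eq_zero_or_pos n with h | h
  · simp only [h, auxA_zero, pow_zero, mul_one]
    positivity
  · have hn1 : (1:ℝ) ≤ n := by exact_mod_cast h
    have hn : (0:ℝ) < n := by linarith
    set y := 2 * Real.pi * (n:ℝ)^2 / x with hy
    have hy0 : 0 < y := by positivity
    have hb : auxA x n ≤ (n:ℝ) * (Real.exp (-y) / y^2) := by
      unfold auxA
      rw [← hy]
      exact mul_le_mul_of_nonneg_left (f_le hy0) hn.le
    refine hb.trans ?_
    have hexp : Real.exp (-y) ≤ Real.exp (-(2 * Real.pi / x)) ^ n := by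
      rw [← Real.exp_nat_mul]
      apply Real.exp_le_exp.2
      have hnn : (n:ℝ) ≤ (n:ℝ)^2 := by nlinarith
      have hpx : (0:ℝ) < 2*Real.pi/x := by positivity
      have h5 := mul_le_mul_of_nonneg_right hnn hpx.le
      rw [hy, show 2*Real.pi*(n:ℝ)^2/x = (n:ℝ)^2 * (2*Real.pi/x) from by ring]
      linarith
    have hy2 : y^2 = (2*Real.pi)^2 * (n:ℝ)^4 / x^2 := by
      rw [hy]; field_simp
    calc (n:ℝ) * (Real.exp (-y) / y^2) = (n:ℝ) / y^2 * Real.exp (-y) := by ring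
    _ ≤ (n:ℝ) / y^2 * Real.exp (-(2 * Real.pi / x)) ^ n := by
        apply mul_le_mul_of_nonneg_left hexp (by positivity)
    _ ≤ x^2 / (2*Real.pi)^2 * Real.exp (-(2 * Real.pi / x)) ^ n := by
        have heq : (n:ℝ)/y^2 = x^2/(2*Real.pi)^2 * ((n:ℝ)/(n:ℝ)^4) := by
          rw [hy2]; field_simp
        have h4 : (n:ℝ)/(n:ℝ)^4 ≤ 1 := by
          rw [div_le_one (by positivity)]
          calc (n:ℝ) = (n:ℝ)^1 := (pow_one _).symm
          _ ≤ (n:ℝ)^4 := pow_le_pow_right₀ hn1 (by norm_num)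
        have hle : (n:ℝ)/y^2 ≤ x^2/(2*Real.pi)^2 := by
          rw [heq]
          calc x^2/(2*Real.pi)^2 * ((n:ℝ)/(n:ℝ)^4) ≤ x^2/(2*Real.pi)^2 * 1 :=
                mul_le_mul_of_nonneg_left h4 (by positivity)
          _ = x^2/(2*Real.pi)^2 := mul_one _
        exact mul_le_mul_of_nonneg_right hle (by positivity)

noncomputable def auxT (b : ℕ → ℝ) (x : ℝ) : ℝ := ∑' n : ℕ, b n * auxA x n
noncomputable def auxB (p : ℕ) (b : ℕ → ℝ) (y : ℝ) : ℝ :=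
  ∑' j : {j : ℕ // ¬ p ∣ j}, b (j : ℕ) * auxA y (j : ℕ)

lemma term_summable {b : ℕ → ℝ} (hb : ∀ n, |b n| ≤ 1) {x : ℝ} (hx : 0 < x) :
    Summable (fun n => b n * auxA x n) := by
  apply Summable.of_abs
  refine Summable.of_nonneg_of_le (fun n => abs_nonneg _) (fun n => ?_) (auxA_summable hx)
  rw [abs_mul]
  calc |b n| * |auxA x n| ≤ 1 * |auxA x n| :=
        mul_le_mul_of_nonneg_right (hb n) (abs_nonneg _)
  _ = auxA x n := by rw [one_mul, abs_of_nonneg (auxA_nonneg hx n)]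

lemma b_pow {b : ℕ → ℝ} (hb1 : b 1 = 1) (hbm : ∀ a c, b (a*c) = b a * b c) (p k : ℕ) :
    b (p ^ k) = b p ^ k := by
  induction k with
  | zero => simpa using hb1
  | succ k ih => rw [pow_succ, hbm, ih, pow_succ]

lemma aux_inj {p : ℕ} (hp : p.Prime) :
    Function.Injective (fun q : ℕ × {j : ℕ // ¬ p ∣ j} => p ^ q.1 * (q.2 : ℕ)) := by
  rintro ⟨a, i, hi⟩ ⟨c, j, hj⟩ h
  simp only at h
  have hi0 : i ≠ 0 := fun h0 => hi (h0 ▸ dvd_zero p)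
  have hj0 : j ≠ 0 := fun h0 => hj (h0 ▸ dvd_zero p)
  have hfa : ∀ (k : ℕ) (i : ℕ), i ≠ 0 → ¬ p ∣ i → (p ^ k * i).factorization p = k := by
    intro k i hi0 hi
    rw [Nat.factorization_mul (pow_ne_zero _ hp.pos.ne') hi0]
    simp [hp.factorization_pow, Nat.factorization_eq_zero_of_not_dvd hi]
  have hac : a = c := by
    rw [← hfa a i hi0 hi, h, hfa c j hj0 hj]
  subst hac
  have : i = j := Nat.eq_of_mul_eq_mul_left (pow_pos hp.pos a) h
  simp [this]

lemma aux_support {p : ℕ} (hp : p.Prime) (g : ℕ → ℝ) (hg0 : g 0 = 0) :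
    Function.support g ⊆
      Set.range (fun q : ℕ × {j : ℕ // ¬ p ∣ j} => p ^ q.1 * (q.2 : ℕ)) := by
  intro n hn
  have hn0 : n ≠ 0 := by rintro rfl; exact hn hg0
  exact ⟨⟨n.factorization p, ⟨n / p ^ n.factorization p, Nat.not_dvd_ordCompl hp hn0⟩⟩,
    Nat.ordProj_mul_ordCompl_eq_self n p⟩

lemma key_decomp {p : ℕ} (hp : p.Prime) {b : ℕ → ℝ} (hb1 : b 1 = 1)
    (hbm : ∀ a c : ℕ, b (a*c) = b a * b c) (hbv : ∀ n, |b n| ≤ 1) {x : ℝ} (hx : 0 < x) :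
    Summable (fun k : ℕ => b p ^ k * (p:ℝ) ^ k * auxB p b (x / (p:ℝ) ^ (2*k))) ∧
      auxT b x = ∑' k : ℕ, b p ^ k * (p:ℝ) ^ k * auxB p b (x / (p:ℝ) ^ (2*k)) := by
  have hp0 : (0:ℝ) < (p:ℝ) := by exact_mod_cast hp.pos
  set i := fun q : ℕ × {j : ℕ // ¬ p ∣ j} => p ^ q.1 * (q.2 : ℕ) with hi_def
  have hsum : Summable (fun n => b n * auxA x n) := term_summable hbv hx
  have hg0 : b 0 * auxA x 0 = 0 := by rw [auxA_zero, mul_zero]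
  have hsupp := aux_support hp (fun n => b n * auxA x n) hg0
  have hinj := aux_inj hp
  have htsum : ∑' q : ℕ × {j : ℕ // ¬ p ∣ j}, b (i q) * auxA x (i q) = auxT b x :=
    hinj.tsum_eq hsupp
  have hsum2 : Summable (fun q : ℕ × {j : ℕ // ¬ p ∣ j} => b (i q) * auxA x (i q)) :=
    (hinj.summable_iff (fun n hn => by_contra fun h => hn (hsupp h))).mpr hsum
  -- per-term identity
  have hterm : ∀ (k : ℕ) (j : {j : ℕ // ¬ p ∣ j}),
      b (i (k, j)) * auxA x (i (k, j))
        = b p ^ k * (p:ℝ) ^ k * (b (j:ℕ) * auxA (x / (p:ℝ)^(2*k)) (j:ℕ)) := by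
    intro k j
    have hx' : x ≠ 0 := hx.ne'
    have hpk : ((p:ℝ))^(2*k) ≠ 0 := by positivity
    have hA : auxA x (p ^ k * (j:ℕ)) = (p:ℝ)^k * auxA (x / (p:ℝ)^(2*k)) (j:ℕ) := by
      unfold auxA
      have harg : 2 * Real.pi * (((p ^ k * (j:ℕ) : ℕ)):ℝ)^2 / x
          = 2 * Real.pi * (((j:ℕ)):ℝ)^2 / (x / (p:ℝ)^(2*k)) := by
        push_cast
        field_simp
        ring
      rw [harg]
      push_cast
      ring
    show b (p ^ k * (j:ℕ)) * auxA x (p ^ k * (j:ℕ)) = _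
    rw [hbm, b_pow hb1 hbm, hA]
    ring
  have hrows : ∀ k : ℕ, (∑' j : {j : ℕ // ¬ p ∣ j}, b (i (k, j)) * auxA x (i (k, j)))
      = b p ^ k * (p:ℝ) ^ k * auxB p b (x / (p:ℝ)^(2*k)) := by
    intro k
    rw [tsum_congr (fun j => hterm k j), tsum_mul_left]
    rfl
  constructor
  · -- summability of the outer series
    have habs : Summable (fun q : ℕ × {j : ℕ // ¬ p ∣ j} => |b (i q) * auxA x (i q)|) :=
      hsum2.abs
    have hD := ((summable_prod_of_nonneg (fun q => abs_nonneg _)).mp habs).2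
    refine Summable.of_abs (Summable.of_nonneg_of_le (fun k => abs_nonneg _) (fun k => ?_) hD)
    rw [← hrows k]
    have := norm_tsum_le_tsum_norm (f := fun j : {j : ℕ // ¬ p ∣ j} => b (i (k, j)) * auxA x (i (k, j)))
      (habs.prod_factor k)
    simpa [Real.norm_eq_abs, abs_mul] using this
  · rw [← htsum, Summable.tsum_prod' hsum2 hsum2.prod_factor]
    exact tsum_congr hrows

lemma liouville_one : liouville 1 = 1 := by simp [liouville]

lemma liouville_prime {p : ℕ} (hp : p.Prime) : liouville p = -1 := by
  simp [liouville, ArithmeticFunction.cardFactors_apply_prime hp]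

lemma liouville_mul {a b : ℕ} (ha : a ≠ 0) (hb : b ≠ 0) :
    liouville (a*b) = liouville a * liouville b := by
  rw [liouville, liouville, liouville, ArithmeticFunction.cardFactors_mul ha hb, pow_add]

lemma abs_le_of_vals {m : ℕ → ℝ} (h : ∀ n, m n = -1 ∨ m n = 0 ∨ m n = 1) :
    ∀ n, |m n| ≤ 1 := by
  intro n; rcases h n with h'|h'|h' <;> rw [h'] <;> norm_num

noncomputable def auxM (p : ℕ) (m : ℕ → ℝ) (n : ℕ) : ℝ :=
  if n = 0 then 0 else m (n / p ^ n.factorization p) * (-1) ^ (n.factorization p)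

lemma auxM_one (p : ℕ) (m : ℕ → ℝ) (h1 : m 1 = 1) : auxM p m 1 = 1 := by
  simp [auxM, Nat.factorization_one, h1]

lemma auxM_mul (p : ℕ) (m : ℕ → ℝ) (hmul : ∀ a b : ℕ, m (a * b) = m a * m b) :
    ∀ a c : ℕ, auxM p m (a*c) = auxM p m a * auxM p m c := by
  intro a c
  rcases eq_or_ne a 0 with rfl | ha
  · simp [auxM]
  rcases eq_or_ne c 0 with rfl | hc
  · simp [auxM]
  have hac : a * c ≠ 0 := mul_ne_zero ha hc
  simp only [auxM, if_neg ha, if_neg hc, if_neg hac]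
  rw [Nat.ordCompl_mul, hmul, Nat.factorization_mul ha hc, Finsupp.add_apply, pow_add]
  ring

lemma auxM_vals (p : ℕ) (m : ℕ → ℝ) (hval : ∀ n, m n = -1 ∨ m n = 0 ∨ m n = 1) :
    ∀ n, auxM p m n = -1 ∨ auxM p m n = 0 ∨ auxM p m n = 1 := by
  intro n
  rcases eq_or_ne n 0 with rfl | hn
  · simp [auxM]
  simp only [auxM, if_neg hn]
  rcases Nat.even_or_odd (n.factorization p) with he | he
  · rw [he.neg_one_pow]
    rcases hval (n / p ^ n.factorization p) with h|h|h <;> rw [h] <;> norm_num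
  · rw [he.neg_one_pow]
    rcases hval (n / p ^ n.factorization p) with h|h|h <;> rw [h] <;> norm_num

lemma auxM_prime_self {p : ℕ} (hp : p.Prime) (m : ℕ → ℝ) (h1 : m 1 = 1) :
    auxM p m p = -1 := by
  simp only [auxM, if_neg hp.pos.ne']
  rw [hp.factorization]
  simp [h1, Nat.div_self hp.pos]

lemma auxM_not_dvd (p : ℕ) (m : ℕ → ℝ) {j : ℕ} (h : ¬ p ∣ j) : auxM p m j = m j := by
  have hj : j ≠ 0 := fun h0 => h (h0 ▸ dvd_zero p)
  simp [auxM, if_neg hj, Nat.factorization_eq_zero_of_not_dvd h]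

lemma aux_eq_of_empty (m : ℕ → ℝ) (hone : m 1 = 1)
    (hmul : ∀ a b : ℕ, m (a * b) = m a * m b)
    (hempty : ∀ p, p.Prime → m p = liouville p) (x : ℝ) :
    auxT m x = auxT liouville x := by
  have key : ∀ n : ℕ, n ≠ 0 → m n = liouville n := by
    intro n
    induction n using Nat.recOnMul with
    | zero => intro h; exact absurd rfl h
    | one => intro _; rw [hone, liouville_one]
    | prime p hp => intro _; exact hempty p hp
    | mul a b iha ihb =>
      intro hab
      have ha : a ≠ 0 := fun h => hab (by rw [h, zero_mul])
      have hb : b ≠ 0 := fun h => hab (by rw [h, mul_zero])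
      rw [hmul, liouville_mul ha hb, iha ha, ihb hb]
  unfold auxT
  apply tsum_congr
  intro n
  rcases eq_or_ne n 0 with rfl | hn
  · simp [auxA_zero]
  · rw [key n hn]

open Real in
lemma step_ineq {p : ℕ} (hp : p.Prime) {m m' : ℕ → ℝ}
    (hm1 : m 1 = 1) (hmmul : ∀ a c : ℕ, m (a*c) = m a * m c) (hmv : ∀ n, |m n| ≤ 1)
    (hm'1 : m' 1 = 1) (hm'mul : ∀ a c : ℕ, m' (a*c) = m' a * m' c) (hm'v : ∀ n, |m' n| ≤ 1)
    (hm'p : m' p = -1) (hagree : ∀ j, ¬ p ∣ j → m j = m' j)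
    (hmp : m p = 0 ∨ m p = 1)
    (hT' : ∀ y : ℝ, 0 < y → 0 < auxT m' y) :
    ∀ x : ℝ, 0 < x → auxT m' x ≤ auxT m x := by
  intro x hx
  have hp0 : (0:ℝ) < (p:ℝ) := by exact_mod_cast hp.pos
  have hpne : (p:ℝ) ≠ 0 := hp0.ne'
  have hBeq : ∀ y, auxB p m y = auxB p m' y :=
    fun y => tsum_congr (fun j => by rw [hagree j j.2])
  have hd' : ∀ y : ℝ, 0 < y →
      Summable (fun k : ℕ => (-1:ℝ)^k * (p:ℝ)^k * auxB p m' (y/(p:ℝ)^(2*k))) ∧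
        auxT m' y = ∑' k : ℕ, (-1:ℝ)^k * (p:ℝ)^k * auxB p m' (y/(p:ℝ)^(2*k)) := by
    intro y hy
    have h := key_decomp hp hm'1 hm'mul hm'v hy
    rwa [hm'p] at h
  have hrec : ∀ y : ℝ, 0 < y →
      auxB p m' y = auxT m' y + (p:ℝ) * auxT m' (y / (p:ℝ)^2) := by
    intro y hy
    obtain ⟨hS, hE⟩ := hd' y hy
    have hy2 : 0 < y / (p:ℝ)^2 := by positivity
    obtain ⟨hS2, hE2⟩ := hd' (y/(p:ℝ)^2) hy2
    have hshift : ∀ k:ℕ, (-1:ℝ)^(k+1) * (p:ℝ)^(k+1) * auxB p m' (y/(p:ℝ)^(2*(k+1)))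
        = (-(p:ℝ)) * ((-1:ℝ)^k * (p:ℝ)^k * auxB p m' ((y/(p:ℝ)^2)/(p:ℝ)^(2*k))) := by
      intro k
      have harg : y/(p:ℝ)^(2*(k+1)) = (y/(p:ℝ)^2)/(p:ℝ)^(2*k) := by
        rw [div_div, ← pow_add]
        ring_nf
      rw [harg]
      ring
    have htail : ∑' k:ℕ, ((-1:ℝ)^(k+1) * (p:ℝ)^(k+1) * auxB p m' (y/(p:ℝ)^(2*(k+1))))
        = (-(p:ℝ)) * auxT m' (y/(p:ℝ)^2) := by
      rw [tsum_congr hshift, tsum_mul_left, ← hE2]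
    have h0 : auxT m' y = auxB p m' y
        + ∑' k:ℕ, ((-1:ℝ)^(k+1) * (p:ℝ)^(k+1) * auxB p m' (y/(p:ℝ)^(2*(k+1)))) := by
      rw [hE, Summable.tsum_eq_zero_add hS]
      congr 1
      norm_num
    rw [htail] at h0
    linarith
  have hB_ge : ∀ y : ℝ, 0 < y → auxT m' y ≤ auxB p m' y ∧ 0 < auxB p m' y := by
    intro y hy
    have h2 : 0 < y/(p:ℝ)^2 := by positivity
    have hr := hrec y hy
    have hmulpos : 0 < (p:ℝ) * auxT m' (y / (p:ℝ)^2) := mul_pos hp0 (hT' _ h2)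
    exact ⟨by linarith, by linarith [hT' _ hy]⟩
  obtain ⟨hSm, hEm⟩ := key_decomp hp hm1 hmmul hmv hx
  rcases hmp with h0 | h1
  · rw [hEm]
    simp only [h0] at *
    have hsingle : ∑' k:ℕ, (0:ℝ)^k * (p:ℝ)^k * auxB p m (x/(p:ℝ)^(2*k))
        = (0:ℝ)^0 * (p:ℝ)^0 * auxB p m (x/(p:ℝ)^(2*0)) := by
      apply tsum_eq_single
      intro k hk
      rw [zero_pow hk, zero_mul, zero_mul]
    rw [hsingle]
    norm_num
    rw [hBeq]
    exact (hB_ge x hx).1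
  · rw [hEm]
    simp only [h1, one_pow, one_mul] at hSm hEm ⊢
    have hnonneg : ∀ k : ℕ, 0 ≤ (p:ℝ)^k * auxB p m (x/(p:ℝ)^(2*k)) := by
      intro k
      have hxk : 0 < x/(p:ℝ)^(2*k) := by positivity
      have := (hB_ge _ hxk).2
      rw [← hBeq] at this
      positivity
    have hle := Summable.le_tsum hSm 0 (fun j _ => hnonneg j)
    have h0term : (p:ℝ)^0 * auxB p m (x/(p:ℝ)^(2*0)) = auxB p m x := by norm_num
    rw [h0term] at hle
    calc auxT m' x ≤ auxB p m' x := (hB_ge x hx).1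
    _ = auxB p m x := (hBeq x).symm
    _ ≤ _ := hle

lemma aux_main (hpos : ∀ x : ℝ, 0 < x → 0 < auxT liouville x) :
    ∀ (k : ℕ) (m : ℕ → ℝ), m 1 = 1 → (∀ a b : ℕ, m (a * b) = m a * m b) →
      (∀ n, m n = -1 ∨ m n = 0 ∨ m n = 1) →
      ∀ (hfin : {p : ℕ | p.Prime ∧ m p ≠ liouville p}.Finite),
        hfin.toFinset.card ≤ k → ∀ x : ℝ, 0 < x → auxT liouville x ≤ auxT m x := by
  intro k
  induction k with
  | zero =>
    intro m hone hmul hval hfin hcard x hx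
    have hempty : ∀ p, p.Prime → m p = liouville p := by
      intro p hp
      by_contra h
      have hmem : p ∈ hfin.toFinset := by
        rw [Set.Finite.mem_toFinset]; exact ⟨hp, h⟩
      have := Finset.card_pos.mpr ⟨p, hmem⟩
      omega
    rw [aux_eq_of_empty m hone hmul hempty x]
  | succ k ih =>
    intro m hone hmul hval hfin hcard x hx
    rcases hfin.toFinset.eq_empty_or_nonempty with he | ⟨p, hpmem⟩
    · have hempty : ∀ p, p.Prime → m p = liouville p := by
        intro p hp
        by_contra h
        have hmem : p ∈ hfin.toFinset := by
          rw [Set.Finite.mem_toFinset]; exact ⟨hp, h⟩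
        rw [he] at hmem
        exact absurd hmem (Finset.notMem_empty p)
      rw [aux_eq_of_empty m hone hmul hempty x]
    · rw [Set.Finite.mem_toFinset] at hpmem
      obtain ⟨hp, hpne⟩ := hpmem
      set m' := auxM p m with hm'def
      have hm'1 : m' 1 = 1 := auxM_one p m hone
      have hm'mul : ∀ a c : ℕ, m' (a*c) = m' a * m' c := auxM_mul p m hmul
      have hm'val : ∀ n, m' n = -1 ∨ m' n = 0 ∨ m' n = 1 := auxM_vals p m hval
      have hm'p : m' p = -1 := auxM_prime_self hp m hone
      have hagree : ∀ j, ¬ p ∣ j → m j = m' j := fun j hj => (auxM_not_dvd p m hj).symm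
      -- bad set of m'
      have hsub : {q : ℕ | q.Prime ∧ m' q ≠ liouville q} ⊆
          {q : ℕ | q.Prime ∧ m q ≠ liouville q} := by
        intro q hq
        obtain ⟨hqp, hqne⟩ := hq
        rcases eq_or_ne q p with rfl | hqp'
        · exact absurd (hm'p.trans (liouville_prime hp).symm) hqne
        · refine ⟨hqp, ?_⟩
          have hpd : ¬ p ∣ q := fun hd => hqp' ((Nat.prime_dvd_prime_iff_eq hp hqp).mp hd).symm
          rwa [hagree q hpd]
      have hfin' : {q : ℕ | q.Prime ∧ m' q ≠ liouville q}.Finite := hfin.subset hsub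
      have hp_notmem : p ∉ hfin'.toFinset := by
        rw [Set.Finite.mem_toFinset]
        rintro ⟨-, hne⟩
        exact hne (hm'p.trans (liouville_prime hp).symm)
      have hsubF : hfin'.toFinset ⊆ hfin.toFinset := by
        intro q hq
        rw [Set.Finite.mem_toFinset] at *
        exact hsub hq
      have hcard' : hfin'.toFinset.card ≤ k := by
        have h1 : hfin'.toFinset ⊆ hfin.toFinset.erase p :=
          fun q hq => Finset.mem_erase.mpr ⟨fun h => hp_notmem (h ▸ hq), hsubF hq⟩
        have h2 := Finset.card_le_card h1
        have h3 : p ∈ hfin.toFinset := by rw [Set.Finite.mem_toFinset]; exact ⟨hp, hpne⟩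
        rw [Finset.card_erase_of_mem h3] at h2
        omega
      have hIH := ih m' hm'1 hm'mul hm'val hfin' hcard'
      have hT'pos : ∀ y : ℝ, 0 < y → 0 < auxT m' y :=
        fun y hy => lt_of_lt_of_le (hpos y hy) (hIH y hy)
      have hmp : m p = 0 ∨ m p = 1 := by
        rcases hval p with h|h|h
        · exact absurd (h.trans (liouville_prime hp).symm) hpne
        · exact Or.inl h
        · exact Or.inr h
      have hstep := step_ineq hp hone hmul (abs_le_of_vals hval) hm'1 hm'mul
        (abs_le_of_vals hm'val) hm'p hagree hmp hT'pos x hx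
      exact le_trans (hIH x hx) hstep

open Real in
theorem mult_sum_ge_liouville_sum (m : ℕ → ℝ)
    (hone : m 1 = 1) (hmul : ∀ a b : ℕ, m (a * b) = m a * m b)
    (hval : ∀ n, m n = -1 ∨ m n = 0 ∨ m n = 1)
    (hfin : {p : ℕ | p.Prime ∧ m p ≠ liouville p}.Finite)
    (hpos : ∀ x : ℝ, 0 < x → 0 < ∑' n : ℕ, liouville n * (n : ℝ) * f (2 * π * (n : ℝ) ^ 2 / x)) :
    ∀ x : ℝ, 0 < x →
      (∑' n : ℕ, liouville n * (n : ℝ) * f (2 * π * (n : ℝ) ^ 2 / x)) ≤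
        ∑' n : ℕ, m n * (n : ℝ) * f (2 * π * (n : ℝ) ^ 2 / x) := by
  have hconv : ∀ (b : ℕ → ℝ) (y : ℝ),
      (∑' n : ℕ, b n * (n:ℝ) * f (2 * π * (n:ℝ)^2 / y)) = auxT b y := by
    intro b y
    unfold auxT auxA
    exact tsum_congr fun n => mul_assoc _ _ _
  intro x hx
  rw [hconv, hconv]
  have hpos' : ∀ y : ℝ, 0 < y → 0 < auxT liouville y := by
    intro y hy
    rw [← hconv liouville y]
    exact hpos y hy
  exact aux_main hpos' hfin.toFinset.card m hone hmul hval hfin le_rfl x hx
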